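/- Let P be a very ample lattice polytope with n vertices which is not normal, and let ν_P be the smallest positive integer such that (k+1)P∩M = V + kP∩M for all k ≥ ν_P, where V is the vertex set. Then k_P ≤ (m_P − d_P − 1)·n + ν_P + 1. -/

import Mathlib

open Finset Pointwise

noncomputable section

/-- Lattice points: `ZL N = ℤ^N`. -/
abbrev ZL (N : ℕ) := Fin N → ℤ

/-- Embedding of the lattice into `ℝ^N`. -/
def toR {N : ℕ} (x : ZL N) : Fin N → ℝ := fun i => (x i : ℝ)

/-- The lattice polytope spanned by a finite set `V` of lattice points. -/
def poly {N : ℕ} (V : Finset (ZL N)) : Set (Fin N → ℝ) :=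
  convexHull ℝ (toR '' (V : Set (ZL N)))

/-- The lattice points of the dilate `k • P`. -/
def latPts {N : ℕ} (V : Finset (ZL N)) (k : ℕ) : Set (ZL N) :=
  {x | toR x ∈ (k : ℝ) • poly V}

/-- `P` is `k`-normal: every lattice point of `kP` is a sum of `k` lattice points of `P`. -/
def kNormal {N : ℕ} (V : Finset (ZL N)) (k : ℕ) : Prop :=
  ∀ x ∈ latPts V k, ∃ f : Fin k → ZL N, (∀ i, f i ∈ latPts V 1) ∧ ∑ i, f i = x

/-- `P` is normal. -/
def NormalPoly {N : ℕ} (V : Finset (ZL N)) : Prop := ∀ k, 1 ≤ k → kNormal V k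

/-- The set of which `d_P` is the least element. -/
def dSet {N : ℕ} (V : Finset (ZL N)) : Set ℕ :=
  {n | 0 < n ∧ ∀ k ≥ n, latPts V (k + 1) = latPts V 1 + latPts V k}

/-- The set of which the `k`-normality threshold `k_P` is the least element. -/
def kSet {N : ℕ} (V : Finset (ZL N)) : Set ℕ :=
  {K | 0 < K ∧ ∀ k ≥ K, kNormal V k}

/-- The set of which `ν_P` is the least element. -/
def nuSet {N : ℕ} (V : Finset (ZL N)) : Set ℕ :=
  {n | 0 < n ∧ ∀ k ≥ n, latPts V (k + 1) = (V : Set (ZL N)) + latPts V k}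

/-- `v` is a vertex of `P`. -/
def IsVertex {N : ℕ} (V : Finset (ZL N)) (v : ZL N) : Prop :=
  v ∈ V ∧ toR v ∈ Set.extremePoints ℝ (poly V)

/-- `P` is very ample: for every vertex `v`, every lattice point of the cone
`ℝ_{≥0}(P - v)` is a finite sum of elements `w - v` with `w ∈ P ∩ M`. -/
def VeryAmple {N : ℕ} (V : Finset (ZL N)) : Prop :=
  ∀ v, IsVertex V v → ∀ u : ZL N,
    (∃ c : ℝ, 0 ≤ c ∧ ∃ p ∈ poly V, toR u = c • (p - toR v)) →
    ∃ (m : ℕ) (w : Fin m → ZL N), (∀ i, w i ∈ latPts V 1) ∧ u = ∑ i, (w i - v)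

/-- The set of numbers `m` such that `x - d_P v` is a sum of `m` elements of `(P ∩ M) - v`;
`σ(x, d_P v)` is its least element. -/
def sigmaSet {N : ℕ} (V : Finset (ZL N)) (dP : ℕ) (x v : ZL N) : Set ℕ :=
  {m | ∃ w : Fin m → ZL N, (∀ i, w i ∈ latPts V 1) ∧ x - dP • v = ∑ i, (w i - v)}

/-- The set of all values `σ(x, d_P v)`; `m_P` is its greatest element. -/
def mSet {N : ℕ} (V : Finset (ZL N)) (dP : ℕ) : Set ℕ :=
  {s | ∃ x ∈ latPts V dP, ∃ v, IsVertex V v ∧ IsLeast (sigmaSet V dP x v) s}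

end

section

lemma toR_add {N : ℕ} (a b : ZL N) : toR (a + b) = toR a + toR b := by
  funext i; simp [toR]

lemma toR_nsmul {N : ℕ} (n : ℕ) (v : ZL N) : toR (n • v) = (n : ℝ) • toR v := by
  funext i; simp [toR]

lemma mem_latPts_one {N : ℕ} {V : Finset (ZL N)} {v : ZL N} (hv : v ∈ V) :
    v ∈ latPts V 1 := by
  show toR v ∈ ((1:ℕ) : ℝ) • poly V
  rw [Nat.cast_one, one_smul]
  exact subset_convexHull ℝ _ ⟨v, hv, rfl⟩

lemma add_mem_latPts {N : ℕ} {V : Finset (ZL N)} {a b : ZL N} {j k : ℕ}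
    (ha : a ∈ latPts V j) (hb : b ∈ latPts V k) : a + b ∈ latPts V (j + k) := by
  show toR (a + b) ∈ ((j + k : ℕ) : ℝ) • convexHull ℝ (toR '' (V : Set (ZL N)))
  have h := (convex_convexHull ℝ (toR '' (V : Set (ZL N)))).add_smul
    (p := (j:ℝ)) (q := (k:ℝ)) (by positivity) (by positivity)
  rw [toR_add, Nat.cast_add, h]
  exact Set.add_mem_add ha hb

lemma strip {N : ℕ} (V : Finset (ZL N)) (W : Set (ZL N)) (b : ℕ)
    (h : ∀ k ≥ b, latPts V (k + 1) = W + latPts V k) :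
    ∀ (c : ℕ), ∀ x ∈ latPts V (b + c), ∃ s : Multiset (ZL N),
      Multiset.card s = c ∧ (∀ u ∈ s, u ∈ W) ∧ ∃ y ∈ latPts V b, x = s.sum + y := by
  intro c
  induction c with
  | zero => intro x hx; exact ⟨0, rfl, by simp, x, hx, by simp⟩
  | succ c ih =>
    intro x hx
    have hx' : x ∈ W + latPts V (b + c) := by
      rw [← h (b + c) (Nat.le_add_right _ _)]; exact hx
    obtain ⟨u, hu, x', hx', rfl⟩ := hx'
    obtain ⟨s, hcard, hmem, y, hy, hsum⟩ := ih x' hx'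
    refine ⟨u ::ₘ s, by simp [hcard], ?_, y, hy, ?_⟩
    · intro z hz
      rcases Multiset.mem_cons.mp hz with rfl | hz
      exacts [hu, hmem z hz]
    · show u + x' = (u ::ₘ s).sum + y
      rw [Multiset.sum_cons, hsum]; abel

lemma pigeonhole {N : ℕ} (V : Finset (ZL N)) (s : Multiset (ZL N))
    (hsV : ∀ u ∈ s, u ∈ V) (t : ℕ) (hcard : t * V.card < Multiset.card s) :
    ∃ v ∈ V, t + 1 ≤ s.count v := by
  by_contra hc
  push_neg at hc
  have h1 : Multiset.card s = ∑ v ∈ V, s.count v := by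
    rw [← Multiset.toFinset_sum_count_eq]
    exact Finset.sum_subset (fun v hv => hsV v (Multiset.mem_toFinset.mp hv))
      (fun v _ hv => Multiset.count_eq_zero.mpr (fun h => hv (Multiset.mem_toFinset.mpr h)))
  have h2 : ∑ v ∈ V, s.count v ≤ ∑ _v ∈ V, t :=
    Finset.sum_le_sum fun v hv => Nat.lt_succ_iff.mp (hc v hv)
  simp [Finset.sum_const, Nat.mul_comm] at h2
  omega

lemma multiset_to_fin {N : ℕ} {V : Finset (ZL N)} {k : ℕ} {x : ZL N}
    (s : Multiset (ZL N)) (hcard : Multiset.card s = k)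
    (hmem : ∀ y ∈ s, y ∈ latPts V 1) (hsum : s.sum = x) :
    ∃ f : Fin k → ZL N, (∀ i, f i ∈ latPts V 1) ∧ ∑ i, f i = x := by
  have hlen : s.toList.length = k := by rw [Multiset.length_toList, hcard]
  refine ⟨fun i => s.toList.get (Fin.cast hlen.symm i), fun i => ?_, ?_⟩
  · exact hmem _ (by rw [← Multiset.mem_toList]; exact List.get_mem _ _)
  · rw [← hsum, ← Multiset.sum_toList]
    rw [← Fin.sum_univ_getElem s.toList]
    exact Fintype.sum_equiv (finCongr hlen.symm) _ _ (fun i => rfl)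

end

/-- If a very ample lattice polytope `P` with `n` vertices is not normal, then
`k_P ≤ (m_P − d_P − 1)·n + ν_P + 1`. -/
theorem stmt10 {N : ℕ} (V : Finset (ZL N)) (dP kP mP nuP : ℕ)
    (hvert : ∀ v ∈ V, toR v ∈ Set.extremePoints ℝ (poly V))
    (hva : VeryAmple V)
    (hdP : IsLeast (dSet V) dP)
    (hkP : IsLeast (kSet V) kP)
    (hmP : IsGreatest (mSet V dP) mP)
    (hnu : IsLeast (nuSet V) nuP)
    (hnn : ¬ NormalPoly V) :
    kP ≤ (mP - dP - 1) * V.card + nuP + 1 := by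
  classical
  have hnu2 := hnu.1.2
  have hd2 := hdP.1.2
  have hdlenu : dP ≤ nuP := by
    apply hdP.2
    refine ⟨hnu.1.1, fun k hk => ?_⟩
    rw [hnu2 k hk]
    apply Set.Subset.antisymm
    · rintro x ⟨u, hu, y, hy, rfl⟩
      exact ⟨u, mem_latPts_one hu, y, hy, rfl⟩
    · rintro x ⟨u, hu, y, hy, rfl⟩
      have h1 : u + y ∈ latPts V (1 + k) := add_mem_latPts hu hy
      rw [Nat.add_comm, hnu2 k hk] at h1
      exact h1
  apply hkP.2
  refine ⟨Nat.succ_pos _, ?_⟩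
  intro k hk x hx
  have hknu : nuP + 1 ≤ k := by omega
  obtain ⟨sV, hcV, hmV, y, hy, hxy⟩ := strip V (V : Set (ZL N)) nuP hnu2 (k - nuP) x
    (by rw [show nuP + (k - nuP) = k by omega]; exact hx)
  obtain ⟨sL, hcL, hmL, z, hz, hyz⟩ := strip V (latPts V 1) dP hd2 (nuP - dP) y
    (by rw [show dP + (nuP - dP) = nuP by omega]; exact hy)
  have hcard' : (mP - dP - 1) * V.card < Multiset.card sV := by rw [hcV]; omega
  obtain ⟨v, hvV, hcount⟩ := pigeonhole V sV hmV (mP - dP - 1) hcard'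
  have hvtx : IsVertex V v := ⟨hvV, hvert v hvV⟩
  have hcone : ∃ c : ℝ, 0 ≤ c ∧ ∃ p ∈ poly V, toR (z - dP • v) = c • (p - toR v) := by
    obtain ⟨p, hp, hpz⟩ := Set.mem_smul_set.mp hz
    refine ⟨(dP : ℝ), by positivity, p, hp, ?_⟩
    have h1 : toR (z - dP • v) = toR z - toR ((dP : ℕ) • v) := by
      funext i; simp [toR]
    rw [h1, toR_nsmul, ← hpz, smul_sub]
  obtain ⟨m, w, hwmem, hweq⟩ := hva v hvtx _ hcone
  have hex : ∃ m, m ∈ sigmaSet V dP z v := ⟨m, w, hwmem, hweq⟩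
  have hleast : IsLeast (sigmaSet V dP z v) (Nat.find hex) :=
    ⟨Nat.find_spec hex, fun b hb => Nat.find_min' hex hb⟩
  set σ := Nat.find hex with hσdef
  have hσle : σ ≤ mP := hmP.2 ⟨z, hz, v, hvtx, hleast⟩
  obtain ⟨w', hw'mem, hw'eq⟩ := hleast.1
  have hσd : σ - dP ≤ Multiset.count v sV := by omega
  have hrep : Multiset.replicate (σ - dP) v ≤ sV := Multiset.le_count_iff_replicate_le.mp hσd
  have hclesV : σ - dP ≤ k - nuP := by
    have := Multiset.count_le_card v sV; omega
  set S := (sV - Multiset.replicate (σ - dP) v) + sL + Multiset.map w' Finset.univ.val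
      + Multiset.replicate (dP - σ) v with hSdef
  have hcm : Multiset.card (Multiset.map w' Finset.univ.val) = σ := by simp
  have hScard : Multiset.card S = k := by
    rw [hSdef]
    simp only [Multiset.card_add, Multiset.card_sub hrep, Multiset.card_replicate, hcm, hcV, hcL]
    omega
  have hSmem : ∀ u ∈ S, u ∈ latPts V 1 := by
    intro u hu
    rw [hSdef] at hu
    simp only [Multiset.mem_add] at hu
    rcases hu with ((hu | hu) | hu) | hu
    · exact mem_latPts_one (hmV u (Multiset.mem_of_le tsub_le_self hu))
    · exact hmL u hu
    · obtain ⟨i, _, rfl⟩ := Multiset.mem_map.mp hu; exact hw'mem i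
    · rw [Multiset.eq_of_mem_replicate hu]; exact mem_latPts_one hvV
  have hrepsum : (sV - Multiset.replicate (σ - dP) v).sum = sV.sum - (σ - dP) • v := by
    have h1 : (sV - Multiset.replicate (σ - dP) v) + Multiset.replicate (σ - dP) v = sV :=
      tsub_add_cancel_of_le hrep
    have h2 := congrArg Multiset.sum h1
    rw [Multiset.sum_add, Multiset.sum_replicate] at h2
    exact eq_sub_of_add_eq h2
  have hW : ∑ i, (w' i - v) = (∑ i, w' i) - σ • v := by
    rw [Finset.sum_sub_distrib, Finset.sum_const, Finset.card_univ, Fintype.card_fin]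
  have hz2 : z = (∑ i, w' i) + dP • v - σ • v := by
    rw [hW] at hw'eq
    rw [sub_eq_iff_eq_add] at hw'eq
    rw [hw'eq]; abel
  have hmap : (Multiset.map w' Finset.univ.val).sum = ∑ i, w' i := rfl
  have hSsum : S.sum = x := by
    rw [hSdef]
    simp only [Multiset.sum_add, hrepsum, Multiset.sum_replicate, hmap]
    rw [hxy, hyz, hz2]
    rcases le_total σ dP with hle | hle
    · rw [Nat.sub_eq_zero_of_le hle, sub_nsmul v hle]
      simp only [zero_nsmul, sub_zero]
      abel
    · rw [Nat.sub_eq_zero_of_le hle, sub_nsmul v hle]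
      simp only [zero_nsmul, add_zero]
      abel
  exact multiset_to_fin S hScard hSmem hSsum
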